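/- Let p be an even integer and z, w nonzero complex numbers with z^{p/2}·z + 1 ≠ 0. If z and w satisfy the system z^{p/2}(1 - zw) = w - z and (1 - zw)(w - z) = zw, then w = (z + z^{p/2})/(z^{p/2}·z + 1) and z satisfies z² - ((z + z^{p/2})/(z^{p/2}z + 1) + 1 + (z^{p/2}z + 1)/(z + z^{p/2}))·z + 1 = 0 (assuming also z + z^{p/2} ≠ 0). -/

import Mathlib

theorem saddle_point_reduction (r : ℤ) (z w : ℂ) (hz : z ≠ 0) (hw : w ≠ 0)
    (hden₁ : z ^ r * z + 1 ≠ 0) (hden₂ : z + z ^ r ≠ 0)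
    (heq₁ : z ^ r * (1 - z * w) = w - z)
    (heq₂ : (1 - z * w) * (w - z) = z * w) :
    w = (z + z ^ r) / (z ^ r * z + 1) ∧
      z ^ 2 - ((z + z ^ r) / (z ^ r * z + 1) + 1 + (z ^ r * z + 1) / (z + z ^ r)) * z + 1 = 0 := by
  have hw' : w = (z + z ^ r) / (z ^ r * z + 1) := by
    rw [eq_div_iff hden₁]
    linear_combination -heq₁
  refine ⟨hw', ?_⟩
  have key : z ^ r * (1 - z ^ 2) ^ 2 = z * (z + z ^ r) * (z ^ r * z + 1) := by
    have hden₁' : z * z ^ r + 1 ≠ 0 := by rwa [mul_comm]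
    rw [hw'] at heq₂
    field_simp at heq₂
    apply mul_right_cancel₀ hden₁
    linear_combination (z ^ r * z + 1) * heq₂
  have hden₁' : z * z ^ r + 1 ≠ 0 := by rwa [mul_comm]
  field_simp
  linear_combination key
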